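/- arXiv:1301.7714 — 2 statements merged into one kernel-verified Lean document; each statement's English description precedes it below -/
import Mathlib

section
/- For all integers n ≥ 1 and 0 ≤ k ≤ n−1, one has Σ_{p=0}^{n} NO(n,k,p) = Σ_{p=0}^{n} NE(n,k,p) = 2^{k+1} · binomial(2n−k−2, n−1). -/
/-- The x-coordinate (number of East steps) of the lattice path `P` after `m` steps. -/
def latticePos {n : ℕ} (P : Fin n → Bool) (m : ℕ) : ℕ :=
  (Finset.univ.filter (fun i : Fin n => (i : ℕ) < m ∧ P i = true)).card

/-- The number of intersections of paths `P` and `Q` (common lattice points with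
coordinate sum strictly between `0` and `n`). -/
def latticeInter {n : ℕ} (P Q : Fin n → Bool) : ℕ :=
  ((Finset.Ioo 0 n).filter (fun m => latticePos P m = latticePos Q m)).card

/-- Number of ordered pairs of lattice paths of length `n`, ending at `(r, n-r)` and
`(s, n-s)` respectively, intersecting exactly `k` times (natural-number version). -/
def Mnat (n k r s : ℕ) : ℕ :=
  (Finset.univ.filter (fun PQ : (Fin n → Bool) × (Fin n → Bool) =>
      latticePos PQ.1 n = r ∧ latticePos PQ.2 n = s ∧ latticeInter PQ.1 PQ.2 = k)).card

/-- `M n k r s`, extended by zero to integer arguments. -/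
def M (n k r s : ℤ) : ℤ :=
  if 0 ≤ n ∧ 0 ≤ k ∧ 0 ≤ r ∧ 0 ≤ s then Mnat n.toNat k.toNat r.toNat s.toNat else 0

/-- `N n k r = M n k r r`. -/
def N (n k r : ℤ) : ℤ := M n k r r

/-- `NE n k p = Σ_{r+s=2p, 0 ≤ r,s ≤ n} M n k r s`. -/
noncomputable def NE (n k p : ℤ) : ℤ := ∑ r ∈ Finset.Icc (0 : ℤ) n, M n k r (2 * p - r)

/-- `NO n k p = Σ_{r+s=2p+1, 0 ≤ r,s ≤ n} M n k r s`. -/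
noncomputable def NO (n k p : ℤ) : ℤ := ∑ r ∈ Finset.Icc (0 : ℤ) n, M n k r (2 * p + 1 - r)

/-- Binomial coefficient for integer arguments (zero unless both are nonnegative). -/
def ichoose (a b : ℤ) : ℤ :=
  if 0 ≤ a ∧ 0 ≤ b then (a.toNat).choose b.toNat else 0



open Finset

section AuxProof

lemma latticePos_zero {n : ℕ} (P : Fin n → Bool) : latticePos P 0 = 0 := by
  simp [latticePos]

lemma latticePos_succ {n : ℕ} (P : Fin n → Bool) (t : ℕ) (h : t < n) :
    latticePos P (t + 1) = latticePos P t + (if P ⟨t, h⟩ then 1 else 0) := by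
  classical
  unfold latticePos
  have hsplit : (Finset.univ.filter (fun i : Fin n => (i : ℕ) < t + 1 ∧ P i = true))
      = (Finset.univ.filter (fun i : Fin n => (i : ℕ) < t ∧ P i = true)) ∪
        (Finset.univ.filter (fun i : Fin n => (i : ℕ) = t ∧ P i = true)) := by
    rw [← Finset.filter_or]
    apply Finset.filter_congr
    intro i _
    constructor <;> intro hi
    · rcases hi with ⟨hlt, hp⟩
      rcases Nat.lt_succ_iff_lt_or_eq.1 hlt with h1 | h1
      · exact Or.inl ⟨h1, hp⟩
      · exact Or.inr ⟨h1, hp⟩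
    · rcases hi with ⟨h1, hp⟩ | ⟨h1, hp⟩
      · exact ⟨Nat.lt_succ_of_lt h1, hp⟩
      · exact ⟨by omega, hp⟩
  rw [hsplit, Finset.card_union_of_disjoint]
  · congr 1
    by_cases hp : P ⟨t, h⟩
    · rw [if_pos hp]
      have : (Finset.univ.filter (fun i : Fin n => (i : ℕ) = t ∧ P i = true)) = {⟨t, h⟩} := by
        ext i
        simp only [Finset.mem_filter, Finset.mem_univ, true_and, Finset.mem_singleton]
        constructor
        · rintro ⟨h1, h2⟩; exact Fin.ext h1
        · rintro rfl; exact ⟨rfl, hp⟩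
      rw [this]; simp
    · rw [if_neg hp]
      have : (Finset.univ.filter (fun i : Fin n => (i : ℕ) = t ∧ P i = true)) = ∅ := by
        ext i
        simp only [Finset.mem_filter, Finset.mem_univ, true_and, Finset.notMem_empty,
          iff_false, not_and]
        intro h1
        have : i = ⟨t, h⟩ := Fin.ext h1
        subst this
        simpa using hp
      rw [this]; simp
  · rw [Finset.disjoint_filter]
    rintro i _ ⟨h1, -⟩ ⟨h2, -⟩
    omega

lemma latticePos_congr {n : ℕ} (P Q : Fin n → Bool) (t : ℕ)
    (h : ∀ i : Fin n, (i : ℕ) < t → P i = Q i) : latticePos P t = latticePos Q t := by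
  unfold latticePos
  congr 1
  apply Finset.filter_congr
  intro i _
  constructor <;> rintro ⟨h1, h2⟩ <;> refine ⟨h1, ?_⟩
  · rw [← h i h1]; exact h2
  · rw [h i h1]; exact h2

lemma latticePos_le_self {n : ℕ} (P : Fin n → Bool) (t : ℕ) : latticePos P t ≤ t := by
  unfold latticePos
  have : ((Finset.univ.filter (fun i : Fin n => (i : ℕ) < t ∧ P i = true)).image
      (fun i : Fin n => (i : ℕ))) ⊆ Finset.range t := by
    intro x hx
    simp only [Finset.mem_image, Finset.mem_filter] at hx
    rcases hx with ⟨i, ⟨-, h1, -⟩, rfl⟩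
    exact Finset.mem_range.2 h1
  calc (Finset.univ.filter (fun i : Fin n => (i : ℕ) < t ∧ P i = true)).card
      = ((Finset.univ.filter (fun i : Fin n => (i : ℕ) < t ∧ P i = true)).image
        (fun i : Fin n => (i : ℕ))).card := by
        rw [Finset.card_image_of_injOn]
        intro a _ b _ hab; exact Fin.ext hab
    _ ≤ (Finset.range t).card := Finset.card_le_card this
    _ = t := Finset.card_range t

section
variable {n m : ℕ}
lemma latticePos_snoc_of_le (Q : Fin m → Bool) (b : Bool) (t : ℕ) (ht : t ≤ m) :
    latticePos (Fin.snoc Q b : Fin (m+1) → Bool) t = latticePos Q t := by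
  induction t with
  | zero => rw [latticePos_zero, latticePos_zero]
  | succ t ih =>
    have h1 : t < m := ht
    rw [latticePos_succ _ t (by omega), latticePos_succ Q t h1, ih (by omega)]
    congr 2
    have : (⟨t, by omega⟩ : Fin (m+1)) = Fin.castSucc ⟨t, h1⟩ := rfl
    rw [this, Fin.snoc_castSucc]

lemma latticePos_snoc_last (Q : Fin m → Bool) (b : Bool) :
    latticePos (Fin.snoc Q b : Fin (m+1) → Bool) (m+1)
      = latticePos Q m + (if b then 1 else 0) := by
  rw [latticePos_succ _ m (by omega), latticePos_snoc_of_le Q b m le_rfl]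
  congr 2
  have : (⟨m, by omega⟩ : Fin (m+1)) = Fin.last m := rfl
  rw [this, Fin.snoc_last]

def meet (m : ℕ) (P Q : Fin m → Bool) : ℕ :=
  ((Finset.Icc 1 m).filter (fun t => latticePos P t = latticePos Q t)).card

lemma meet_snoc (P Q : Fin m → Bool) (a b : Bool) :
    meet (m+1) (Fin.snoc P a) (Fin.snoc Q b)
      = meet m P Q + (if latticePos P m + (if a then 1 else 0)
          = latticePos Q m + (if b then 1 else 0) then 1 else 0) := by
  unfold meet
  have hIcc : Finset.Icc 1 (m+1) = insert (m+1) (Finset.Icc 1 m) := by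
    ext x; simp [Finset.mem_Icc, Finset.mem_insert]; omega
  rw [hIcc, Finset.filter_insert]
  have hcongr : (Finset.Icc 1 m).filter
      (fun t => latticePos (Fin.snoc P a : Fin (m+1) → Bool) t
        = latticePos (Fin.snoc Q b : Fin (m+1) → Bool) t)
      = (Finset.Icc 1 m).filter (fun t => latticePos P t = latticePos Q t) := by
    apply Finset.filter_congr
    intro t htm
    simp only [Finset.mem_Icc] at htm
    rw [latticePos_snoc_of_le P a t htm.2, latticePos_snoc_of_le Q b t htm.2]
  rw [hcongr]
  by_cases hmeet : latticePos P m + (if a then 1 else 0) = latticePos Q m + (if b then 1 else 0)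
  · have hc : latticePos (Fin.snoc P a : Fin (m+1) → Bool) (m+1)
        = latticePos (Fin.snoc Q b : Fin (m+1) → Bool) (m+1) := by
      rw [latticePos_snoc_last, latticePos_snoc_last]; exact hmeet
    rw [if_pos hc, Finset.card_insert_of_notMem (by simp), if_pos hmeet]
  · have hc : ¬ (latticePos (Fin.snoc P a : Fin (m+1) → Bool) (m+1)
        = latticePos (Fin.snoc Q b : Fin (m+1) → Bool) (m+1)) := by
      rw [latticePos_snoc_last, latticePos_snoc_last]; exact hmeet
    rw [if_neg hc, if_neg hmeet]
    omega


lemma latticePos_castSucc (P : Fin (m+1) → Bool) (t : ℕ) (ht : t ≤ m) :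
    latticePos (P ∘ Fin.castSucc) t = latticePos P t := by
  conv_rhs => rw [← Fin.snoc_init_self P]
  rw [latticePos_snoc_of_le _ _ t ht]
  rfl

lemma inter_eq_meet (P Q : Fin (m+1) → Bool) :
    latticeInter P Q = meet m (P ∘ Fin.castSucc) (Q ∘ Fin.castSucc) := by
  unfold latticeInter meet
  have : Finset.Ioo 0 (m+1) = Finset.Icc 1 m := by ext x; simp; omega
  rw [this]
  congr 1
  apply Finset.filter_congr
  intro t htm
  simp only [Finset.mem_Icc] at htm
  rw [latticePos_castSucc P t htm.2, latticePos_castSucc Q t htm.2]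

lemma inter_snoc (P Q : Fin m → Bool) (a b : Bool) :
    latticeInter (Fin.snoc P a : Fin (m+1) → Bool) (Fin.snoc Q b) = meet m P Q := by
  rw [inter_eq_meet]
  congr 1 <;> funext i <;> simp [Fin.snoc_castSucc]

end

lemma card_filter_pairs_succ (m : ℕ)
    (p : (Fin (m+1) → Bool) × (Fin (m+1) → Bool) → Prop) [DecidablePred p] :
    (Finset.univ.filter p).card
      = ∑ ab : Bool × Bool, (Finset.univ.filter
          (fun PQ : (Fin m → Bool) × (Fin m → Bool) =>
            p (Fin.snoc PQ.1 ab.1, Fin.snoc PQ.2 ab.2))).card := by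
  classical
  rw [Finset.card_eq_sum_card_fiberwise
    (f := fun PQ : (Fin (m+1) → Bool) × (Fin (m+1) → Bool) =>
      (PQ.1 (Fin.last m), PQ.2 (Fin.last m))) (t := Finset.univ) (fun a _ => Finset.mem_univ _)]
  apply Finset.sum_congr rfl
  intro ab _
  apply Finset.card_nbij' (i := fun PQ => (PQ.1 ∘ Fin.castSucc, PQ.2 ∘ Fin.castSucc))
    (j := fun PQ => (Fin.snoc PQ.1 ab.1, Fin.snoc PQ.2 ab.2))
  · intro x hx
    simp only [Finset.mem_coe, Finset.mem_filter, Finset.mem_univ, true_and] at hx ⊢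
    rcases hx with ⟨hp, hab⟩
    have h1 : (Fin.snoc (x.1 ∘ Fin.castSucc) ab.1 : Fin (m+1) → Bool) = x.1 := by
      have := Fin.snoc_init_self x.1
      rw [show ab.1 = x.1 (Fin.last m) by rw [← hab]] at *
      exact this
    have h2 : (Fin.snoc (x.2 ∘ Fin.castSucc) ab.2 : Fin (m+1) → Bool) = x.2 := by
      have := Fin.snoc_init_self x.2
      rw [show ab.2 = x.2 (Fin.last m) by rw [← hab]] at *
      exact this
    rw [h1, h2]
    exact hp
  · intro x hx
    simp only [Finset.mem_coe, Finset.mem_filter, Finset.mem_univ, true_and] at hx ⊢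
    exact ⟨hx, by simp [Fin.snoc_last]⟩
  · intro x hx
    simp only [Finset.mem_coe, Finset.mem_filter, Finset.mem_univ, true_and] at hx
    rcases hx with ⟨-, hab⟩
    have h1 : (Fin.snoc (x.1 ∘ Fin.castSucc) ab.1 : Fin (m+1) → Bool) = x.1 := by
      rw [show ab.1 = x.1 (Fin.last m) by rw [← hab]]
      exact Fin.snoc_init_self x.1
    have h2 : (Fin.snoc (x.2 ∘ Fin.castSucc) ab.2 : Fin (m+1) → Bool) = x.2 := by
      rw [show ab.2 = x.2 (Fin.last m) by rw [← hab]]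
      exact Fin.snoc_init_self x.2
    rw [Prod.ext_iff]
    exact ⟨h1, h2⟩
  · intro x hx
    simp [Fin.snoc_castSucc]

def Ac (m k : ℕ) (d : ℤ) : ℕ :=
  (Finset.univ.filter (fun PQ : (Fin m → Bool) × (Fin m → Bool) =>
    meet m PQ.1 PQ.2 = k ∧ (latticePos PQ.1 m : ℤ) - latticePos PQ.2 m = d)).card

lemma Ac_zero (k : ℕ) (d : ℤ) : Ac 0 k d = if k = 0 ∧ d = 0 then 1 else 0 := by
  classical
  have h : ∀ PQ : (Fin 0 → Bool) × (Fin 0 → Bool),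
      meet 0 PQ.1 PQ.2 = 0 ∧ (latticePos PQ.1 0 : ℤ) - latticePos PQ.2 0 = 0 := by
    intro PQ
    constructor
    · simp [meet]
    · rw [latticePos_zero, latticePos_zero]; ring
  unfold Ac
  split_ifs with hkd
  · rcases hkd with ⟨rfl, rfl⟩
    rw [Finset.filter_true_of_mem (fun x _ => h x)]
    simp
  · rw [Finset.filter_false_of_mem, Finset.card_empty]
    intro x _
    rcases h x with ⟨h1, h2⟩
    rw [h1, h2]
    tauto

lemma Ac_step_term (m k : ℕ) (d : ℤ) (a b : Bool) :
    (Finset.univ.filter (fun PQ : (Fin m → Bool) × (Fin m → Bool) =>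
      meet (m+1) (Fin.snoc PQ.1 a) (Fin.snoc PQ.2 b) = k ∧
      (latticePos (Fin.snoc PQ.1 a : Fin (m+1) → Bool) (m+1) : ℤ)
        - latticePos (Fin.snoc PQ.2 b : Fin (m+1) → Bool) (m+1) = d)).card
    = if d = 0 then
        (if k = 0 then 0 else Ac m (k-1) ((if b then (1:ℤ) else 0) - (if a then 1 else 0)))
      else Ac m k (d + (if b then (1:ℤ) else 0) - (if a then 1 else 0)) := by
  classical
  have key : ∀ PQ : (Fin m → Bool) × (Fin m → Bool),
      (meet (m+1) (Fin.snoc PQ.1 a) (Fin.snoc PQ.2 b) = k ∧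
      (latticePos (Fin.snoc PQ.1 a : Fin (m+1) → Bool) (m+1) : ℤ)
        - latticePos (Fin.snoc PQ.2 b : Fin (m+1) → Bool) (m+1) = d)
      ↔ (if d = 0 then
          (k ≠ 0 ∧ meet m PQ.1 PQ.2 = k - 1 ∧ (latticePos PQ.1 m : ℤ) - latticePos PQ.2 m
            = (if b then (1:ℤ) else 0) - (if a then 1 else 0))
        else (meet m PQ.1 PQ.2 = k ∧ (latticePos PQ.1 m : ℤ) - latticePos PQ.2 m
            = d + (if b then (1:ℤ) else 0) - (if a then 1 else 0))) := by
    intro PQ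
    rw [meet_snoc, latticePos_snoc_last, latticePos_snoc_last]
    cases a <;> cases b <;>
      simp only [if_true, if_false, Bool.false_eq_true, ite_true, ite_false] <;>
      split_ifs with h1 h2 <;> push_cast <;> omega
  by_cases hd : d = 0
  · by_cases hk : k = 0
    · rw [if_pos hd, if_pos hk]
      rw [Finset.filter_false_of_mem, Finset.card_empty]
      intro x _
      rw [key x, if_pos hd]
      subst hk
      tauto
    · rw [if_pos hd, if_neg hk]
      unfold Ac
      congr 1
      apply Finset.filter_congr
      intro x _
      rw [key x, if_pos hd]
      constructor
      · rintro ⟨-, h1, h2⟩; exact ⟨h1, h2⟩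
      · rintro ⟨h1, h2⟩; exact ⟨hk, h1, h2⟩
  · rw [if_neg hd]
    unfold Ac
    congr 1
    apply Finset.filter_congr
    intro x _
    rw [key x, if_neg hd]

lemma Ac_succ (m k : ℕ) (d : ℤ) :
    Ac (m+1) k d = if d = 0 then
        (if k = 0 then 0 else 2 * Ac m (k-1) 0 + Ac m (k-1) 1 + Ac m (k-1) (-1))
      else 2 * Ac m k d + Ac m k (d-1) + Ac m k (d+1) := by
  classical
  rw [show Ac (m+1) k d = (Finset.univ.filter
      (fun PQ : (Fin (m+1) → Bool) × (Fin (m+1) → Bool) =>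
        meet (m+1) PQ.1 PQ.2 = k ∧
        (latticePos PQ.1 (m+1) : ℤ) - latticePos PQ.2 (m+1) = d)).card from rfl]
  rw [card_filter_pairs_succ m]
  rw [Fintype.sum_prod_type]
  simp only [Fintype.sum_bool]
  rw [Ac_step_term m k d true true, Ac_step_term m k d true false,
    Ac_step_term m k d false true, Ac_step_term m k d false false]
  simp only [if_true, if_false, Bool.false_eq_true, ite_true, ite_false]
  by_cases hd : d = 0
  · subst hd
    by_cases hk : k = 0
    · simp [hk]
    · simp only [if_pos rfl, if_neg hk]
      rw [show (0:ℤ) - 1 = -1 by ring, show (1:ℤ) - 1 = 0 by ring,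
        show (0:ℤ) - 0 = 0 by ring, show (1:ℤ) - 0 = 1 by ring]
      norm_num
      ring
  · simp only [if_neg hd]
    rw [show d + 1 - 1 = d by ring, show d + 0 - 0 = d by ring,
      show d + 0 - 1 = d - 1 by ring, show d + 1 - 0 = d + 1 by ring]
    ring

lemma meet_comm (m : ℕ) (P Q : Fin m → Bool) : meet m P Q = meet m Q P := by
  unfold meet
  congr 1
  apply Finset.filter_congr
  intro t _
  exact eq_comm

lemma Ac_neg (m k : ℕ) (d : ℤ) : Ac m k (-d) = Ac m k d := by
  unfold Ac
  apply Finset.card_nbij' (i := fun PQ => (PQ.2, PQ.1)) (j := fun PQ => (PQ.2, PQ.1)) <;>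
    intro x hx <;> simp only [Finset.mem_coe, Finset.mem_filter, Finset.mem_univ, true_and] at hx ⊢ <;>
    first
      | exact ⟨by rw [meet_comm]; exact hx.1, by omega⟩
      | rfl

lemma ichoose_of_neg_left {a b : ℤ} (h : a < 0) : ichoose a b = 0 := by
  unfold ichoose
  rw [if_neg]
  rintro ⟨h1, -⟩
  omega

lemma ichoose_of_neg_right {a b : ℤ} (h : b < 0) : ichoose a b = 0 := by
  unfold ichoose
  rw [if_neg]
  rintro ⟨-, h1⟩
  omega

lemma ichoose_nonneg_eval {a b : ℕ} : ichoose (a : ℤ) (b : ℤ) = a.choose b := by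
  unfold ichoose
  rw [if_pos ⟨Int.ofNat_nonneg a, Int.ofNat_nonneg b⟩]
  simp

lemma ichoose_of_lt {a b : ℤ} (h : a < b) (hb : 0 ≤ b) : ichoose a b = 0 := by
  rcases lt_or_ge a 0 with ha | ha
  · exact ichoose_of_neg_left ha
  · unfold ichoose
    rw [if_pos ⟨ha, hb⟩]
    rw [Nat.choose_eq_zero_of_lt (by omega)]
    rfl

lemma ichoose_pascal (a : ℤ) {b : ℤ} (hb : 0 ≤ b) :
    ichoose (a + 1) (b + 1) = ichoose a b + ichoose a (b + 1) := by
  rcases lt_or_ge a 0 with ha | ha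
  · rw [ichoose_of_neg_left ha, ichoose_of_neg_left ha]
    rcases lt_or_ge (a + 1) 0 with h1 | h1
    · rw [ichoose_of_neg_left h1]; ring
    · have haeq : a = -1 := by omega
      subst haeq
      rw [show (-1 : ℤ) + 1 = ((0:ℕ) : ℤ) by ring]
      rw [show b + 1 = ((b.toNat + 1 : ℕ) : ℤ) by omega]
      rw [ichoose_nonneg_eval]
      rw [Nat.choose_eq_zero_of_lt (by omega)]
      ring
  · obtain ⟨a', rfl⟩ : ∃ a' : ℕ, a = (a' : ℤ) := ⟨a.toNat, by omega⟩
    obtain ⟨b', rfl⟩ : ∃ b' : ℕ, b = (b' : ℤ) := ⟨b.toNat, by omega⟩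
    rw [show (a' : ℤ) + 1 = ((a' + 1 : ℕ) : ℤ) by push_cast; ring,
      show (b' : ℤ) + 1 = ((b' + 1 : ℕ) : ℤ) by push_cast; ring,
      ichoose_nonneg_eval, ichoose_nonneg_eval, ichoose_nonneg_eval]
    rw [Nat.choose_succ_succ]
    push_cast
    ring

lemma ichoose_symm_half (m : ℕ) : ichoose (2*m+1) m = ichoose (2*m+1) (m+1) := by
  rw [show (2*(m:ℤ)+1) = ((2*m+1 : ℕ) : ℤ) by push_cast; ring,
    show ((m:ℤ)+1) = ((m+1 : ℕ) : ℤ) by push_cast; ring,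
    ichoose_nonneg_eval, ichoose_nonneg_eval]
  congr 1
  rw [← Nat.choose_symm (by omega : m + 1 ≤ 2*m+1)]
  congr 1
  omega

def G (m k e : ℕ) : ℤ :=
  2^k * (ichoose (2*(m:ℤ) - k - 1) ((m:ℤ) + e - 1) - ichoose (2*(m:ℤ) - k - 1) ((m:ℤ) + e))

lemma G_vanish (m k e : ℕ) (hm : 1 ≤ m) (h : m + 1 ≤ k) : G m k e = 0 := by
  unfold G
  rw [ichoose_of_lt (by push_cast; omega) (by push_cast; omega),
    ichoose_of_lt (by push_cast; omega) (by push_cast; omega)]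
  ring

lemma Gd0 (m k : ℕ) (hm : 1 ≤ m) : G (m+1) (k+1) 0 = 2 * G m k 0 + 2 * G m k 1 := by
  unfold G
  push_cast
  have p1 := ichoose_pascal (2*(m:ℤ) - k - 1) (b := (m:ℤ) - 1) (by push_cast; omega)
  have p2 := ichoose_pascal (2*(m:ℤ) - k - 1) (b := (m:ℤ)) (by positivity)
  rw [show 2*(m:ℤ) - (k:ℤ) - 1 + 1 = 2*(m:ℤ) - k by ring, show (m:ℤ) - 1 + 1 = (m:ℤ) by ring] at p1
  rw [show 2*(m:ℤ) - (k:ℤ) - 1 + 1 = 2*(m:ℤ) - k by ring] at p2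
  rw [show 2*((m:ℤ)+1) - ((k:ℤ)+1) - 1 = 2*(m:ℤ) - k by ring,
    show (m:ℤ) + 1 + 0 - 1 = (m:ℤ) by ring, show (m:ℤ) + 1 + 0 = (m:ℤ) + 1 by ring,
    show (m:ℤ) + 0 - 1 = (m:ℤ) - 1 by ring, show (m:ℤ) + 0 = (m:ℤ) by ring,
    show (m:ℤ) + 1 - 1 = (m:ℤ) by ring]
  linear_combination (2:ℤ)^(k+1) * p1 - (2:ℤ)^(k+1) * p2

lemma Gdpos (m k e : ℕ) (hm : 1 ≤ m) (he : 1 ≤ e) :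
    G (m+1) k e = 2 * G m k e + G m k (e-1) + G m k (e+1) := by
  unfold G
  rw [show (((e-1:ℕ)):ℤ) = (e:ℤ) - 1 by omega]
  push_cast
  have q1 := ichoose_pascal (2*(m:ℤ) - k) (b := (m:ℤ) + e - 1) (by push_cast; omega)
  have q2 := ichoose_pascal (2*(m:ℤ) - k) (b := (m:ℤ) + e) (by push_cast; omega)
  have q3 := ichoose_pascal (2*(m:ℤ) - k - 1) (b := (m:ℤ) + e - 2) (by push_cast; omega)
  have q5 := ichoose_pascal (2*(m:ℤ) - k - 1) (b := (m:ℤ) + e) (by push_cast; omega)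
  rw [show 2*(m:ℤ) - (k:ℤ) + 1 = 2*((m:ℤ)+1) - k - 1 by ring] at q1 q2
  rw [show (m:ℤ) + e - 1 + 1 = (m:ℤ) + e by ring] at q1
  rw [show 2*(m:ℤ) - (k:ℤ) - 1 + 1 = 2*(m:ℤ) - k by ring] at q3 q5
  rw [show (m:ℤ) + e - 2 + 1 = (m:ℤ) + e - 1 by ring] at q3
  rw [show (m:ℤ) + 1 + e - 1 = (m:ℤ) + e by ring, show (m:ℤ) + 1 + e = (m:ℤ) + e + 1 by ring,
    show (m:ℤ) + ((e:ℤ) - 1) - 1 = (m:ℤ) + e - 2 by ring,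
    show (m:ℤ) + ((e:ℤ) - 1) = (m:ℤ) + e - 1 by ring,
    show (m:ℤ) + ((e:ℤ) + 1) - 1 = (m:ℤ) + e by ring,
    show (m:ℤ) + ((e:ℤ) + 1) = (m:ℤ) + e + 1 by ring]
  linear_combination (2:ℤ)^k * q1 - (2:ℤ)^k * q2 + (2:ℤ)^k * q3 - (2:ℤ)^k * q5

lemma Ac_closed : ∀ (m : ℕ), 1 ≤ m → ∀ (k : ℕ) (d : ℤ),
    (Ac m k d : ℤ) = G m k d.natAbs := by
  intro m
  induction m with
  | zero => omega
  | succ m ih =>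
    intro _ k d
    rcases Nat.eq_zero_or_pos m with rfl | hm
    · -- base case m+1 = 1
      rw [Ac_succ]
      by_cases hd : d = 0
      · subst hd
        rw [if_pos rfl]
        by_cases hk : k = 0
        · subst hk
          rw [if_pos rfl]
          show (0:ℤ) = G 1 0 0
          decide
        · rw [if_neg hk]
          obtain ⟨k', hk'⟩ : ∃ k', k - 1 = k' := ⟨k - 1, rfl⟩
          have hkk : k = k' + 1 := by omega
          rw [hk', Ac_zero, Ac_zero, Ac_zero]
          by_cases hk' : k' = 0
          · subst hk'
            rw [if_pos ⟨rfl, rfl⟩, if_neg (by rintro ⟨-, h⟩; exact one_ne_zero h),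
              if_neg (by rintro ⟨-, h⟩; omega)]
            rw [hkk]
            show ((2 * 1 + 0 + 0 : ℕ) : ℤ) = G 1 1 ((0:ℤ)).natAbs
            decide
          · rw [if_neg (by rintro ⟨h, -⟩; exact hk' h), if_neg (by rintro ⟨h, -⟩; exact hk' h),
              if_neg (by rintro ⟨h, -⟩; exact hk' h)]
            rw [hkk, G_vanish 1 (k'+1) _ le_rfl (by omega)]
            norm_num
      · rw [if_neg hd]
        rw [Ac_zero, Ac_zero, Ac_zero]
        rw [if_neg (by rintro ⟨-, h⟩; exact hd h)]
        by_cases hk : k = 0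
        · subst hk
          by_cases h1 : d = 1
          · subst h1
            rw [if_pos ⟨rfl, by ring⟩, if_neg (by rintro ⟨-, h⟩; omega)]
            show ((2 * 0 + 1 + 0 : ℕ) : ℤ) = G 1 0 ((1:ℤ)).natAbs
            decide
          · by_cases h2 : d = -1
            · subst h2
              rw [if_neg (by rintro ⟨-, h⟩; omega), if_pos ⟨rfl, by ring⟩]
              show ((2 * 0 + 0 + 1 : ℕ) : ℤ) = G 1 0 ((-1:ℤ)).natAbs
              decide
            · rw [if_neg (by rintro ⟨-, h⟩; omega), if_neg (by rintro ⟨-, h⟩; omega)]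
              unfold G
              rw [ichoose_of_lt (by omega) (by omega), ichoose_of_lt (by omega) (by omega)]
              norm_num
        · rw [if_neg (by rintro ⟨h, -⟩; exact hk h), if_neg (by rintro ⟨h, -⟩; exact hk h)]
          unfold G
          rw [ichoose_of_lt (by omega) (by omega), ichoose_of_lt (by omega) (by omega)]
          norm_num
    · -- inductive step, 1 ≤ m
      by_cases hd : d = 0
      · subst hd
        rw [Ac_succ, if_pos rfl]
        by_cases hk : k = 0
        · subst hk
          rw [if_pos rfl]
          show (0:ℤ) = G (m+1) 0 0
          unfold G
          push_cast
          rw [show 2*((m:ℤ)+1) - 0 - 1 = 2*(m:ℤ)+1 by ring,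
            show (m:ℤ) + 1 + 0 - 1 = (m:ℤ) by ring,
            show (m:ℤ) + 1 + 0 = (m:ℤ) + 1 by ring]
          have := ichoose_symm_half m
          push_cast at this
          rw [this]
          ring
        · rw [if_neg hk]
          obtain ⟨k', hk'⟩ : ∃ k', k - 1 = k' := ⟨k - 1, rfl⟩
          have hkk : k = k' + 1 := by omega
          rw [hk']
          push_cast
          rw [ih hm k' 0, ih hm k' 1, ih hm k' (-1)]
          rw [show ((0:ℤ)).natAbs = 0 by rfl, show ((1:ℤ)).natAbs = 1 by rfl,
            show ((-1:ℤ)).natAbs = 1 by rfl]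
          rw [hkk, Gd0 m k' hm]
          ring
      · -- d ≠ 0
        have main : ∀ d : ℤ, 0 < d → (Ac (m+1) k d : ℤ) = G (m+1) k d.natAbs := by
          intro d hd0
          rw [Ac_succ, if_neg (by omega)]
          push_cast
          rw [ih hm k d, ih hm k (d-1), ih hm k (d+1)]
          rw [show (d-1).natAbs = d.natAbs - 1 by omega,
            show (d+1).natAbs = d.natAbs + 1 by omega]
          rw [Gdpos m k d.natAbs hm (by omega)]
        rcases lt_or_gt_of_ne hd with hneg | hpos
        · have h := Ac_neg (m+1) k d
          rw [← h, main (-d) (by omega), Int.natAbs_neg]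
        · exact main d hpos

def Tt (m k : ℕ) : ℕ :=
  (Finset.univ.filter (fun PQ : (Fin m → Bool) × (Fin m → Bool) =>
    meet m PQ.1 PQ.2 = k)).card

lemma Tt_eq_sum (m k : ℕ) : Tt m k = ∑ d ∈ Finset.Icc (-(m:ℤ)) m, Ac m k d := by
  classical
  unfold Tt
  rw [Finset.card_eq_sum_card_fiberwise
    (f := fun PQ : (Fin m → Bool) × (Fin m → Bool) =>
      (latticePos PQ.1 m : ℤ) - latticePos PQ.2 m)
    (t := Finset.Icc (-(m:ℤ)) m) ?hmem]
  case hmem =>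
    intro x _
    simp only [Finset.mem_coe, Finset.mem_Icc]
    have h1 := latticePos_le_self x.1 m
    have h2 := latticePos_le_self x.2 m
    omega
  apply Finset.sum_congr rfl
  intro d _
  unfold Ac
  rw [Finset.filter_filter]

lemma sum_Icc_symm (m : ℕ) (f : ℤ → ℤ) :
    ∑ d ∈ Finset.Icc (-(m:ℤ)) m, f d
      = f 0 + ∑ i ∈ Finset.range m, (f (i+1) + f (-(i+1))) := by
  induction m with
  | zero => simp
  | succ m ih =>
    have hins : Finset.Icc (-((m+1:ℕ)):ℤ) ((m+1:ℕ):ℤ)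
        = insert (-((m:ℤ)+1)) (insert ((m:ℤ)+1) (Finset.Icc (-(m:ℤ)) m)) := by
      ext x
      simp only [Finset.mem_Icc, Finset.mem_insert]
      push_cast
      omega
    rw [hins, Finset.sum_insert, Finset.sum_insert, ih, Finset.sum_range_succ]
    · push_cast
      ring
    · simp only [Finset.mem_Icc]
      omega
    · simp only [Finset.mem_insert, Finset.mem_Icc]
      push_cast
      omega

lemma Tt_closed (m k : ℕ) : (Tt m k : ℤ) = 2^k * ichoose (2*(m:ℤ) - k) m := by
  classical
  rcases Nat.eq_zero_or_pos m with rfl | hm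
  · -- m = 0
    have h : ∀ PQ : (Fin 0 → Bool) × (Fin 0 → Bool), meet 0 PQ.1 PQ.2 = 0 := by
      intro PQ; simp [meet]
    by_cases hk : k = 0
    · subst hk
      unfold Tt
      rw [Finset.filter_true_of_mem (fun x _ => h x)]
      norm_num
      decide
    · unfold Tt
      rw [Finset.filter_false_of_mem, Finset.card_empty]
      · rw [ichoose_of_neg_left (by push_cast; omega)]
        norm_num
      · intro x _
        rw [h x]
        omega
  · rw [Tt_eq_sum]
    push_cast
    rw [sum_Icc_symm m (fun d => (Ac m k d : ℤ))]
    rw [Ac_closed m hm k 0, Int.natAbs_zero]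
    have hterm : ∀ i ∈ Finset.range m,
        ((Ac m k ((i:ℤ)+1) : ℤ) + (Ac m k (-((i:ℤ)+1)) : ℤ))
          = (2 * 2^k) * ((fun j : ℕ => ichoose (2*(m:ℤ)-k-1) ((m:ℤ)+(j:ℤ))) i
              - (fun j : ℕ => ichoose (2*(m:ℤ)-k-1) ((m:ℤ)+(j:ℤ))) (i+1)) := by
      intro i _
      rw [Ac_closed m hm k ((i:ℤ)+1), Ac_closed m hm k (-((i:ℤ)+1))]
      rw [show (((i:ℤ)+1)).natAbs = i + 1 by omega, show ((-((i:ℤ)+1))).natAbs = i + 1 by omega]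
      unfold G
      beta_reduce
      rw [show (m:ℤ) + ((i+1:ℕ):ℤ) - 1 = (m:ℤ) + (i:ℤ) by push_cast; ring]
      ring
    rw [Finset.sum_congr rfl hterm, ← Finset.mul_sum,
      Finset.sum_range_sub' (fun j : ℕ => ichoose (2*(m:ℤ)-k-1) ((m:ℤ)+(j:ℤ)))]
    beta_reduce
    rw [show (m:ℤ) + ((0:ℕ):ℤ) = (m:ℤ) by push_cast; ring]
    rw [ichoose_of_lt (a := 2*(m:ℤ)-k-1) (b := (m:ℤ)+(m:ℤ)) (by push_cast; omega) (by push_cast; omega)]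
    unfold G
    rw [show (m:ℤ) + ((0:ℕ):ℤ) - 1 = (m:ℤ) - 1 by push_cast; ring,
      show (m:ℤ) + ((0:ℕ):ℤ) = (m:ℤ) by push_cast; ring]
    have p := ichoose_pascal (2*(m:ℤ)-k-1) (b := (m:ℤ)-1) (by push_cast; omega)
    rw [show 2*(m:ℤ)-(k:ℤ)-1+1 = 2*(m:ℤ)-k by ring, show (m:ℤ)-1+1 = (m:ℤ) by ring] at p
    linear_combination (-(2:ℤ)^k) * p

def Tcnt (n k : ℕ) : ℕ :=
  (Finset.univ.filter (fun PQ : (Fin n → Bool) × (Fin n → Bool) =>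
    latticeInter PQ.1 PQ.2 = k)).card
def Ecnt (n k : ℕ) : ℕ :=
  (Finset.univ.filter (fun PQ : (Fin n → Bool) × (Fin n → Bool) =>
    latticeInter PQ.1 PQ.2 = k ∧ Even (latticePos PQ.1 n + latticePos PQ.2 n))).card
def Ocnt (n k : ℕ) : ℕ :=
  (Finset.univ.filter (fun PQ : (Fin n → Bool) × (Fin n → Bool) =>
    latticeInter PQ.1 PQ.2 = k ∧ ¬ Even (latticePos PQ.1 n + latticePos PQ.2 n))).card

lemma Tcnt_succ (m k : ℕ) : Tcnt (m+1) k = 4 * Tt m k := by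
  classical
  unfold Tcnt
  rw [card_filter_pairs_succ m]
  have : ∀ ab : Bool × Bool, (Finset.univ.filter
      (fun PQ : (Fin m → Bool) × (Fin m → Bool) =>
        latticeInter (Fin.snoc PQ.1 ab.1 : Fin (m+1) → Bool) (Fin.snoc PQ.2 ab.2) = k)).card
      = Tt m k := by
    intro ab
    unfold Tt
    congr 1
    apply Finset.filter_congr
    intro x _
    rw [inter_snoc]
  rw [Finset.sum_congr rfl (fun ab _ => this ab)]
  simp only [Finset.sum_const, Finset.card_univ]
  have : Fintype.card (Bool × Bool) = 4 := by decide
  rw [this]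
  ring

def flipLast {m : ℕ} (Q : Fin (m+1) → Bool) : Fin (m+1) → Bool :=
  Function.update Q (Fin.last m) (!(Q (Fin.last m)))

lemma flipLast_flipLast {m : ℕ} (Q : Fin (m+1) → Bool) : flipLast (flipLast Q) = Q := by
  unfold flipLast
  rw [Function.update_self, Function.update_idem, Bool.not_not, Function.update_eq_self]

lemma latticePos_flipLast_le {m : ℕ} (Q : Fin (m+1) → Bool) (t : ℕ) (ht : t ≤ m) :
    latticePos (flipLast Q) t = latticePos Q t := by
  apply latticePos_congr
  intro i hi
  unfold flipLast
  rw [Function.update_of_ne]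
  intro hEq
  rw [hEq] at hi
  simp only [Fin.val_last] at hi
  omega

lemma inter_flipLast {m : ℕ} (P Q : Fin (m+1) → Bool) :
    latticeInter P (flipLast Q) = latticeInter P Q := by
  unfold latticeInter
  congr 1
  apply Finset.filter_congr
  intro t htm
  simp only [Finset.mem_Ioo] at htm
  rw [latticePos_flipLast_le Q t (by omega)]

lemma parity_flipLast {m : ℕ} (P Q : Fin (m+1) → Bool) :
    Even (latticePos P (m+1) + latticePos (flipLast Q) (m+1))
      ↔ ¬ Even (latticePos P (m+1) + latticePos Q (m+1)) := by
  rw [latticePos_succ Q m (by omega), latticePos_succ (flipLast Q) m (by omega),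
    latticePos_flipLast_le Q m le_rfl]
  have h1 : (⟨m, by omega⟩ : Fin (m+1)) = Fin.last m := rfl
  rw [h1]
  unfold flipLast
  rw [Function.update_self]
  rcases Bool.dichotomy (Q (Fin.last m)) with h | h <;>
    simp only [h, Bool.not_false, Bool.not_true, if_true, if_false,
      Bool.false_eq_true, Bool.true_eq_false, Nat.even_iff] <;> omega

lemma Ocnt_eq_Ecnt (m k : ℕ) : Ocnt (m+1) k = Ecnt (m+1) k := by
  classical
  unfold Ocnt Ecnt
  apply Finset.card_nbij' (i := fun PQ => (PQ.1, flipLast PQ.2))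
    (j := fun PQ => (PQ.1, flipLast PQ.2)) <;>
    intro x hx <;> simp only [Finset.mem_coe, Finset.mem_filter, Finset.mem_univ, true_and] at hx ⊢
  · exact ⟨by rw [inter_flipLast]; exact hx.1, (parity_flipLast x.1 x.2).2 hx.2⟩
  · refine ⟨by rw [inter_flipLast]; exact hx.1, ?_⟩
    intro hcon
    exact ((parity_flipLast x.1 x.2).1 hcon) hx.2
  · show (x.1, flipLast (flipLast x.2)) = x
    rw [flipLast_flipLast]
  · show (x.1, flipLast (flipLast x.2)) = x
    rw [flipLast_flipLast]

lemma Ecnt_add_Ocnt (n k : ℕ) : Ecnt n k + Ocnt n k = Tcnt n k := by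
  classical
  unfold Ecnt Ocnt Tcnt
  rw [← Finset.filter_filter (fun PQ : (Fin n → Bool) × (Fin n → Bool) =>
      latticeInter PQ.1 PQ.2 = k), ← Finset.filter_filter (fun PQ : (Fin n → Bool) × (Fin n → Bool) =>
      latticeInter PQ.1 PQ.2 = k)]
  exact Finset.card_filter_add_card_filter_not _

lemma Mnat_zero_of_s_gt {n k r s : ℕ} (h : n < s) : Mnat n k r s = 0 := by
  unfold Mnat
  rw [Finset.filter_false_of_mem, Finset.card_empty]
  rintro x _ ⟨-, h2, -⟩
  have := latticePos_le_self x.2 n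
  omega

lemma M_zero_right (nn kk : ℕ) (r s : ℤ) (h : s < 0 ∨ (nn:ℤ) < s) :
    M nn kk r s = 0 := by
  unfold M
  rcases h with h | h
  · rw [if_neg]
    rintro ⟨-, -, -, h4⟩
    omega
  · split_ifs with hcond
    · rw [Mnat_zero_of_s_gt (by omega)]
      rfl
    · rfl

lemma row_sum (nn kk : ℕ) (c : ℤ) (hc0 : 0 ≤ c) (hc1 : c ≤ 1) (r : ℤ)
    (hr : r ∈ Finset.Icc (0:ℤ) nn) :
    ∑ p ∈ Finset.Icc (0:ℤ) nn, M nn kk r (2*p + c - r)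
      = ∑ s ∈ (Finset.Icc (0:ℤ) nn).filter (fun s => (r + s) % 2 = c % 2),
          M nn kk r s := by
  simp only [Finset.mem_Icc] at hr
  rw [← Finset.sum_filter_of_ne (p := fun p => 0 ≤ 2*p + c - r ∧ 2*p + c - r ≤ (nn:ℤ))
    (by
      intro p _ hne
      by_contra hcon
      exact hne (M_zero_right nn kk r _ (by omega)))]
  apply Finset.sum_nbij' (i := fun p => 2*p + c - r) (j := fun s => (r + s - c) / 2)
  · intro a ha
    simp only [Finset.mem_filter, Finset.mem_Icc] at ha ⊢
    omega
  · intro a ha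
    simp only [Finset.mem_filter, Finset.mem_Icc] at ha ⊢
    omega
  · intro a ha
    simp only [Finset.mem_filter, Finset.mem_Icc] at ha
    omega
  · intro a ha
    simp only [Finset.mem_filter, Finset.mem_Icc] at ha
    omega
  · intro a _
    rfl

lemma fiber_card (nn kk : ℕ) (c : ℤ) (rs : ℤ × ℤ)
    (hmem : rs ∈ (Finset.Icc (0:ℤ) nn ×ˢ Finset.Icc (0:ℤ) nn).filter
      (fun rs => (rs.1 + rs.2) % 2 = c % 2)) :
    ((Finset.univ.filter (fun PQ : (Fin nn → Bool) × (Fin nn → Bool) =>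
        latticeInter PQ.1 PQ.2 = kk ∧
          (((latticePos PQ.1 nn : ℕ) : ℤ) + ((latticePos PQ.2 nn : ℕ) : ℤ)) % 2 = c % 2)).filter
      (fun PQ => (((latticePos PQ.1 nn : ℕ) : ℤ), ((latticePos PQ.2 nn : ℕ) : ℤ)) = rs)).card
    = M nn kk rs.1 rs.2 := by
  classical
  obtain ⟨r, s⟩ := rs
  simp only [Finset.mem_filter, Finset.mem_product, Finset.mem_Icc] at hmem
  obtain ⟨⟨⟨hr0, hrn⟩, ⟨hs0, hsn⟩⟩, hpar⟩ := hmem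
  unfold M
  rw [if_pos ⟨Int.ofNat_nonneg nn, Int.ofNat_nonneg kk, hr0, hs0⟩]
  unfold Mnat
  rw [Finset.filter_filter]
  norm_cast
  congr 1
  apply Finset.filter_congr
  intro x _
  simp only [Int.toNat_natCast, Prod.mk.injEq]
  constructor
  · rintro ⟨⟨h1, h2⟩, h3, h4⟩
    refine ⟨by omega, by omega, h1⟩
  · rintro ⟨h1, h2, h3⟩
    refine ⟨⟨h3, ?_⟩, by omega, by omega⟩
    omega

lemma sum_to_card (nn kk : ℕ) (c : ℤ) :
    ∑ r ∈ Finset.Icc (0:ℤ) nn,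
      ∑ s ∈ (Finset.Icc (0:ℤ) nn).filter (fun s => (r + s) % 2 = c % 2), M nn kk r s
    = ((Finset.univ.filter (fun PQ : (Fin nn → Bool) × (Fin nn → Bool) =>
        latticeInter PQ.1 PQ.2 = kk ∧
          (((latticePos PQ.1 nn : ℕ) : ℤ) + ((latticePos PQ.2 nn : ℕ) : ℤ)) % 2 = c % 2)).card : ℤ) := by
  classical
  rw [Finset.card_eq_sum_card_fiberwise
    (f := fun PQ : (Fin nn → Bool) × (Fin nn → Bool) =>
      (((latticePos PQ.1 nn : ℕ) : ℤ), ((latticePos PQ.2 nn : ℕ) : ℤ)))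
    (t := (Finset.Icc (0:ℤ) nn ×ˢ Finset.Icc (0:ℤ) nn).filter
      (fun rs => (rs.1 + rs.2) % 2 = c % 2))
    (by
      intro x hx
      simp only [Finset.mem_coe, Finset.mem_filter, Finset.mem_univ, true_and] at hx
      simp only [Finset.mem_coe, Finset.mem_filter, Finset.mem_product, Finset.mem_Icc]
      have h1 := latticePos_le_self x.1 nn
      have h2 := latticePos_le_self x.2 nn
      refine ⟨⟨⟨by positivity, by exact_mod_cast Nat.cast_le.2 h1⟩,
        ⟨by positivity, by exact_mod_cast Nat.cast_le.2 h2⟩⟩, ?_⟩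
      exact hx.2)]
  push_cast
  rw [Finset.sum_congr rfl (fun rs hrs => fiber_card nn kk c rs hrs)]
  rw [Finset.sum_filter, Finset.sum_product, ← Finset.sum_congr rfl
    (fun r _ => Finset.sum_filter (fun s => (r + s) % 2 = c % 2) (M nn kk r))]

lemma sum_NE (nn kk : ℕ) :
    (∑ p ∈ Finset.Icc (0:ℤ) nn, NE nn kk p) = (Ecnt nn kk : ℤ) := by
  classical
  unfold NE
  rw [Finset.sum_comm]
  rw [Finset.sum_congr rfl (fun r hr => by
    rw [Finset.sum_congr rfl (fun p _ => by
      rw [show 2*p - r = 2*p + 0 - r by ring]), row_sum nn kk 0 le_rfl zero_le_one r hr])]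
  rw [sum_to_card nn kk 0]
  norm_cast
  unfold Ecnt
  congr 1
  apply Finset.filter_congr
  intro x _
  constructor
  · rintro ⟨h1, h2⟩
    refine ⟨h1, ?_⟩
    rw [Nat.even_iff]
    omega
  · rintro ⟨h1, h2⟩
    rw [Nat.even_iff] at h2
    refine ⟨h1, ?_⟩
    omega

lemma sum_NO (nn kk : ℕ) :
    (∑ p ∈ Finset.Icc (0:ℤ) nn, NO nn kk p) = (Ocnt nn kk : ℤ) := by
  classical
  unfold NO
  rw [Finset.sum_comm]
  rw [Finset.sum_congr rfl (fun r hr => by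
    rw [Finset.sum_congr rfl (fun p _ => by
      rw [show 2*p + 1 - r = 2*p + 1 - r by ring]), row_sum nn kk 1 zero_le_one le_rfl r hr])]
  rw [sum_to_card nn kk 1]
  norm_cast
  unfold Ocnt
  congr 1
  apply Finset.filter_congr
  intro x _
  constructor
  · rintro ⟨h1, h2⟩
    refine ⟨h1, ?_⟩
    rw [Nat.even_iff]
    omega
  · rintro ⟨h1, h2⟩
    rw [Nat.even_iff] at h2
    refine ⟨h1, ?_⟩
    omega

end AuxProof

/-- For all integers `n ≥ 1` and `0 ≤ k ≤ n−1`,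
`Σ_p NO(n,k,p) = Σ_p NE(n,k,p) = 2^(k+1) · binom(2n−k−2, n−1)`. -/
theorem total_sums_eq (n k : ℤ) (hn : 1 ≤ n) (hk : 0 ≤ k) (hkn : k ≤ n - 1) :
    (∑ p ∈ Finset.Icc (0 : ℤ) n, NO n k p) = (∑ p ∈ Finset.Icc (0 : ℤ) n, NE n k p) ∧
    (∑ p ∈ Finset.Icc (0 : ℤ) n, NE n k p) =
      2 ^ (k + 1).toNat * ichoose (2 * n - k - 2) (n - 1) := by
  obtain ⟨nn, rfl⟩ : ∃ nn : ℕ, n = (nn : ℤ) := ⟨n.toNat, by omega⟩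
  obtain ⟨kk, rfl⟩ : ∃ kk : ℕ, k = (kk : ℤ) := ⟨k.toNat, by omega⟩
  obtain ⟨m, rfl⟩ : ∃ m : ℕ, nn = m + 1 := ⟨nn - 1, by omega⟩
  rw [show (((m+1:ℕ)):ℤ) = ((m:ℕ):ℤ) + 1 by push_cast; ring] at *
  rw [show ((m:ℕ):ℤ) + 1 = (((m+1:ℕ)):ℤ) by push_cast; ring]
  rw [sum_NE (m+1) kk, sum_NO (m+1) kk]
  have hEO := Ocnt_eq_Ecnt m kk
  have hE2 : Ecnt (m+1) kk = 2 * Tt m kk := by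
    have h1 := Ecnt_add_Ocnt (m+1) kk
    have h2 := Tcnt_succ m kk
    omega
  constructor
  · exact_mod_cast congrArg (Nat.cast : ℕ → ℤ) hEO
  · rw [show ((kk:ℤ) + 1).toNat = kk + 1 by omega]
    rw [show 2 * (((m+1:ℕ)):ℤ) - kk - 2 = 2*((m:ℕ):ℤ) - kk by push_cast; ring]
    rw [show (((m+1:ℕ)):ℤ) - 1 = ((m:ℕ):ℤ) by push_cast; ring]
    rw [hE2]
    push_cast
    rw [Tt_closed m kk]
    ring
end

section
/- For all integers n ≥ 2, 0 ≤ k ≤ n−2, and r, s with 0 ≤ r, r < s−1, s ≤ n, one has M(n,k,r,s) = M(n−1,k,r,s) + M(n−1,k,r−1,s) + M(n−1,k,r,s−1) + M(n−1,k,r−1,s−1). -/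
lemma latticePos_snoc {m : ℕ} (P : Fin m → Bool) (b : Bool) (j : ℕ) :
    latticePos (Fin.snoc P b) j = latticePos P j + if m < j ∧ b = true then 1 else 0 := by
  simp only [latticePos, Finset.card_filter]
  rw [Fin.sum_univ_castSucc]
  simp [Fin.snoc_castSucc, Fin.snoc_last]

lemma latticePos_stable {m : ℕ} (P : Fin m → Bool) {j : ℕ} (hj : m ≤ j) :
    latticePos P j = latticePos P m := by
  unfold latticePos
  congr 1
  apply Finset.filter_congr
  intro i _
  have := i.isLt
  simp only [eq_iff_iff, and_congr_left_iff]
  intro _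
  omega

lemma latticeInter_snoc {m : ℕ} (P Q : Fin m → Bool) (b c : Bool)
    (h : latticePos P m ≠ latticePos Q m) :
    latticeInter (Fin.snoc P b : Fin (m+1) → Bool) (Fin.snoc Q c) = latticeInter P Q := by
  unfold latticeInter
  congr 1
  apply Finset.ext
  intro j
  simp only [Finset.mem_filter, Finset.mem_Ioo, latticePos_snoc]
  constructor
  · rintro ⟨⟨h0, h1⟩, he⟩
    have hjm : ¬ (m < j) := by omega
    simp [hjm] at he
    have : j ≠ m := by rintro rfl; exact h he
    exact ⟨⟨h0, by omega⟩, he⟩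
  · rintro ⟨⟨h0, h1⟩, he⟩
    have hjm : ¬ (m < j) := by omega
    simp [hjm]
    exact ⟨⟨h0, by omega⟩, he⟩

def snocEquivB (m : ℕ) : ((Fin m → Bool) × Bool) ≃ (Fin (m+1) → Bool) where
  toFun x := Fin.snoc x.1 x.2
  invFun f := (Fin.init f, f (Fin.last m))
  left_inv := by rintro ⟨P, b⟩; simp
  right_inv := fun f => Fin.snoc_init_self f

lemma card_filter_equiv {α β : Type*} [Fintype α] [Fintype β] (e : α ≃ β)
    (p : β → Prop) [DecidablePred p] :
    (Finset.univ.filter p).card = (Finset.univ.filter (fun a => p (e a))).card := by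
  rw [← Finset.card_map e.toEmbedding]
  congr 1
  ext b
  simp [Equiv.exists_congr_left (e := e)]

lemma Mnat_succ (m k r s : ℕ) (hrs : r + 1 < s) :
    Mnat (m+1) k r s = Mnat m k r s + (if 1 ≤ r then Mnat m k (r-1) s else 0)
      + Mnat m k r (s-1) + (if 1 ≤ r then Mnat m k (r-1) (s-1) else 0) := by
  classical
  have key : Mnat (m+1) k r s =
      (Finset.univ.filter (fun x : ((Fin m → Bool) × (Fin m → Bool)) × (Bool × Bool) =>
        latticePos x.1.1 m + (if x.2.1 = true then 1 else 0) = r ∧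
        latticePos x.1.2 m + (if x.2.2 = true then 1 else 0) = s ∧
        latticeInter x.1.1 x.1.2 = k)).card := by
    unfold Mnat
    rw [card_filter_equiv ((Equiv.prodProdProdComm (Fin m → Bool) (Fin m → Bool) Bool
      Bool).trans ((snocEquivB m).prodCongr (snocEquivB m)))]
    congr 1
    apply Finset.filter_congr
    rintro ⟨⟨P, Q⟩, b, c⟩ -
    simp only [Equiv.trans_apply, Equiv.prodProdProdComm_apply, Equiv.prodCongr_apply,
      Prod.map, snocEquivB, Equiv.coe_fn_mk, eq_iff_iff]
    have hP : latticePos (Fin.snoc P b : Fin (m+1) → Bool) (m+1)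
        = latticePos P m + (if b = true then 1 else 0) := by
      rw [latticePos_snoc, latticePos_stable P (Nat.le_succ m)]
      simp
    have hQ : latticePos (Fin.snoc Q c : Fin (m+1) → Bool) (m+1)
        = latticePos Q m + (if c = true then 1 else 0) := by
      rw [latticePos_snoc, latticePos_stable Q (Nat.le_succ m)]
      simp
    rw [hP, hQ]
    constructor
    · rintro ⟨h1, h2, h3⟩
      refine ⟨h1, h2, ?_⟩
      rw [← h3, latticeInter_snoc]
      intro hPQ
      rcases b <;> rcases c <;> simp at h1 h2 <;> omega
    · rintro ⟨h1, h2, h3⟩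
      refine ⟨h1, h2, ?_⟩
      rw [latticeInter_snoc, h3]
      intro hPQ
      rcases b <;> rcases c <;> simp at h1 h2 <;> omega
  rw [key, Finset.card_filter, Fintype.sum_prod_type, Finset.sum_comm,
    Fintype.sum_prod_type]
  rw [Fintype.sum_bool]
  conv_lhs => rw [Fintype.sum_bool, Fintype.sum_bool]
  simp only [if_true, if_false, Bool.false_eq_true, Nat.add_zero, ← Finset.card_filter]
  have hs1 : 1 ≤ s := by omega
  have c1 : (Finset.univ.filter (fun i : (Fin m → Bool) × (Fin m → Bool) =>
      latticePos i.1 m + 1 = r ∧ latticePos i.2 m + 1 = s ∧ latticeInter i.1 i.2 = k)).card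
      = if 1 ≤ r then Mnat m k (r-1) (s-1) else 0 := by
    rcases le_or_gt 1 r with hr | hr
    · rw [if_pos hr]
      unfold Mnat
      congr 1
      ext x
      simp only [Finset.mem_filter]
      constructor <;> rintro ⟨hu, h1, h2, h3⟩ <;> exact ⟨hu, by omega, by omega, h3⟩
    · rw [if_neg (by omega), Finset.card_eq_zero, Finset.filter_false_of_mem]
      rintro x - ⟨h1, -⟩
      omega
  have c2 : (Finset.univ.filter (fun i : (Fin m → Bool) × (Fin m → Bool) =>
      latticePos i.1 m + 1 = r ∧ latticePos i.2 m = s ∧ latticeInter i.1 i.2 = k)).card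
      = if 1 ≤ r then Mnat m k (r-1) s else 0 := by
    rcases le_or_gt 1 r with hr | hr
    · rw [if_pos hr]
      unfold Mnat
      congr 1
      ext x
      simp only [Finset.mem_filter]
      constructor <;> rintro ⟨hu, h1, h2, h3⟩ <;> exact ⟨hu, by omega, h2, h3⟩
    · rw [if_neg (by omega), Finset.card_eq_zero, Finset.filter_false_of_mem]
      rintro x - ⟨h1, -⟩
      omega
  have c3 : (Finset.univ.filter (fun i : (Fin m → Bool) × (Fin m → Bool) =>
      latticePos i.1 m = r ∧ latticePos i.2 m + 1 = s ∧ latticeInter i.1 i.2 = k)).card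
      = Mnat m k r (s-1) := by
    unfold Mnat
    congr 1
    ext x
    simp only [Finset.mem_filter]
    constructor <;> rintro ⟨hu, h1, h2, h3⟩ <;> exact ⟨hu, h1, by omega, h3⟩
  have c4 : (Finset.univ.filter (fun i : (Fin m → Bool) × (Fin m → Bool) =>
      latticePos i.1 m = r ∧ latticePos i.2 m = s ∧ latticeInter i.1 i.2 = k)).card
      = Mnat m k r s := by
    rfl
  rw [c1, c2, c3, c4]
  ring

/-- The recurrence for `M(n,k,r,s)` when `r < s − 1`. -/
theorem M_recurrence_far (n k r s : ℤ) (hn : 2 ≤ n) (hk : 0 ≤ k) (hkn : k ≤ n - 2)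
    (hr : 0 ≤ r) (hrs : r < s - 1) (hs : s ≤ n) :
    M n k r s =
      M (n - 1) k r s + M (n - 1) k (r - 1) s + M (n - 1) k r (s - 1) +
        M (n - 1) k (r - 1) (s - 1) := by
  obtain ⟨m, hm⟩ : ∃ m : ℕ, n.toNat = m + 1 := ⟨n.toNat - 1, by omega⟩
  have key := Mnat_succ m k.toNat r.toNat s.toNat (by omega)
  have hn1 : (n - 1).toNat = m := by omega
  have hs1 : (s - 1).toNat = s.toNat - 1 := by omega
  rcases le_or_gt 1 r with h1 | h1
  · have hr1 : (r - 1).toNat = r.toNat - 1 := by omega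
    rw [if_pos (show 1 ≤ r.toNat by omega), if_pos (show 1 ≤ r.toNat by omega)] at key
    unfold M
    rw [if_pos ⟨by omega, hk, hr, by omega⟩, if_pos ⟨by omega, hk, hr, by omega⟩,
        if_pos ⟨by omega, hk, by omega, by omega⟩, if_pos ⟨by omega, hk, hr, by omega⟩,
        if_pos ⟨by omega, hk, by omega, by omega⟩]
    rw [hm, hn1, hr1, hs1]
    exact_mod_cast key
  · have hr0 : r = 0 := by omega
    subst hr0
    rw [if_neg (by omega : ¬ 1 ≤ (0:ℤ).toNat), if_neg (by omega : ¬ 1 ≤ (0:ℤ).toNat)] at key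
    unfold M
    rw [if_pos ⟨by omega, hk, le_refl 0, by omega⟩, if_pos ⟨by omega, hk, le_refl 0, by omega⟩,
        if_neg (by omega), if_pos ⟨by omega, hk, le_refl 0, by omega⟩, if_neg (by omega)]
    rw [hm, hn1, hs1]
    simp only [add_zero]
    exact_mod_cast key
end
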